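/- arXiv:1807.06258 — 2 statements merged into one kernel-verified Lean document; each statement's English description precedes it below -/
import Mathlib

section
/- Let (U,Θ,ρ) be a probability space, N ∈ ℕ, Σ a symmetric positive definite N×N real matrix, and δ ∈ ℝ^N. Let G_n : U → ℝ^N (n ∈ ℕ) and G_0 : U → ℝ^N be measurable maps and W : U → [0,∞) a measurable function with ∫_U (1 + W(z))² dρ(z) < ∞, such that |G_n(z)| ≤ W(z) and |G_0(z)| ≤ W(z) for all n and ρ-almost every z, and G_n(z) → G_0(z) as n → ∞ for ρ-almost every z. For each n (and for 0), define Φ_n(z) = (1/2)⟨Σ^{-1}(δ − G_n(z)), δ − G_n(z)⟩, Z_n = ∫_U exp(−Φ_n(z)) dρ(z), and let μ_n be the probability measure on U with density dμ_n/dρ = exp(−Φ_n)/Z_n. Then there exists z_0 > 0 with Z_n ≥ z_0 for all n, and d_Hell(μ_n, μ_0) → 0 as n → ∞. -/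
open MeasureTheory Real Filter Matrix

/-- Euclidean norm on `ℝ^N`. -/
noncomputable def euclNorm {N : ℕ} (v : Fin N → ℝ) : ℝ := Real.sqrt (v ⬝ᵥ v)

/-- Least-squares potential `Φ(z) = ½ ⟨Σ⁻¹(δ - G z), δ - G z⟩`. -/
noncomputable def potential {U : Type*} {N : ℕ} (S : Matrix (Fin N) (Fin N) ℝ)
    (δ : Fin N → ℝ) (G : U → Fin N → ℝ) (z : U) : ℝ :=
  1 / 2 * ((S⁻¹).mulVec (δ - G z) ⬝ᵥ (δ - G z))

/-- Hellinger distance between two measures, absolutely continuous with respect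
to `ρ`, given by their densities `f, g`. -/
noncomputable def hellingerDist {U : Type*} [MeasurableSpace U] (ρ : Measure U)
    (f g : U → ℝ) : ℝ :=
  Real.sqrt (1 / 2 * ∫ z, (Real.sqrt (f z) - Real.sqrt (g z)) ^ 2 ∂ρ)

/-- Gibbs density `exp(-Φ)/Z` with `Z = ∫ exp(-Φ) dρ`. -/
noncomputable def gibbsDensity {U : Type*} [MeasurableSpace U] (ρ : Measure U)
    (Φ : U → ℝ) (z : U) : ℝ :=
  Real.exp (-Φ z) / ∫ w, Real.exp (-Φ w) ∂ρ

lemma euclNorm_eq {N : ℕ} (v : Fin N → ℝ) :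
    euclNorm v = ‖(WithLp.equiv 2 (Fin N → ℝ)).symm v‖ := by
  rw [euclNorm, EuclideanSpace.norm_eq]
  congr 1
  simp [dotProduct, sq, Real.norm_eq_abs, abs_mul_abs_self]

lemma euclNorm_nonneg {N : ℕ} (v : Fin N → ℝ) : 0 ≤ euclNorm v := Real.sqrt_nonneg _

lemma euclNorm_sub_le {N : ℕ} (a b : Fin N → ℝ) :
    euclNorm (a - b) ≤ euclNorm a + euclNorm b := by
  simp only [euclNorm_eq]
  rw [show (WithLp.equiv 2 (Fin N → ℝ)).symm (a - b)
      = (WithLp.equiv 2 (Fin N → ℝ)).symm a - (WithLp.equiv 2 (Fin N → ℝ)).symm b from rfl]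
  exact norm_sub_le _ _

lemma abs_apply_le_euclNorm {N : ℕ} (v : Fin N → ℝ) (i : Fin N) : |v i| ≤ euclNorm v := by
  rw [euclNorm, ← Real.sqrt_sq_eq_abs]
  apply Real.sqrt_le_sqrt
  rw [dotProduct]
  calc v i ^ 2 = v i * v i := sq (v i)
  _ ≤ ∑ j, v j * v j :=
      Finset.single_le_sum (f := fun j => v j * v j)
        (fun j _ => mul_self_nonneg _) (Finset.mem_univ i)

lemma potential_nonneg {U : Type*} {N : ℕ} {S : Matrix (Fin N) (Fin N) ℝ} (hS : S.PosDef)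
    (δ : Fin N → ℝ) (G : U → Fin N → ℝ) (z : U) : 0 ≤ potential S δ G z := by
  have h := hS.inv.posSemidef.dotProduct_mulVec_nonneg (δ - G z)
  simp only [star_trivial] at h
  rw [potential, dotProduct_comm]
  positivity

lemma potential_le {U : Type*} {N : ℕ} (S : Matrix (Fin N) (Fin N) ℝ)
    (δ : Fin N → ℝ) (G : U → Fin N → ℝ) (z : U) :
    potential S δ G z ≤ 1 / 2 * (∑ i, ∑ j, |S⁻¹ i j|) *
      (euclNorm δ + euclNorm (G z)) ^ 2 := by
  set A := S⁻¹ with hA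
  set x : Fin N → ℝ := δ - G z with hx
  set r := euclNorm x with hrdef
  have hr0 : 0 ≤ r := euclNorm_nonneg x
  have hr : r ≤ euclNorm δ + euclNorm (G z) := euclNorm_sub_le δ (G z)
  have hdot : A.mulVec x ⬝ᵥ x ≤ (∑ i, ∑ j, |A i j|) * r ^ 2 := by
    rw [dotProduct]
    calc ∑ i, (A.mulVec x) i * x i
        ≤ ∑ i, |(A.mulVec x) i * x i| := Finset.sum_le_sum (fun i _ => le_abs_self _)
      _ ≤ ∑ i, (∑ j, |A i j| * r) * r := by
          apply Finset.sum_le_sum; intro i _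
          rw [abs_mul]
          have h1 : |(A.mulVec x) i| ≤ ∑ j, |A i j| * r := by
            rw [Matrix.mulVec, dotProduct]
            calc |∑ j, A i j * x j| ≤ ∑ j, |A i j * x j| := Finset.abs_sum_le_sum_abs _ _
              _ ≤ ∑ j, |A i j| * r := by
                  apply Finset.sum_le_sum; intro j _
                  rw [abs_mul]
                  exact mul_le_mul_of_nonneg_left (abs_apply_le_euclNorm x j) (abs_nonneg _)
          have h2 : |x i| ≤ r := abs_apply_le_euclNorm x i
          have h3 : (0:ℝ) ≤ ∑ j, |A i j| * r :=
            Finset.sum_nonneg fun j _ => mul_nonneg (abs_nonneg _) hr0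
          exact mul_le_mul h1 h2 (abs_nonneg _) h3
      _ = (∑ i, ∑ j, |A i j|) * r ^ 2 := by
          rw [Finset.sum_mul]
          apply Finset.sum_congr rfl; intro i _
          rw [← Finset.sum_mul, sq, mul_assoc]
  have hsq : r ^ 2 ≤ (euclNorm δ + euclNorm (G z)) ^ 2 := pow_le_pow_left₀ hr0 hr 2
  have hK : (0:ℝ) ≤ ∑ i, ∑ j, |A i j| :=
    Finset.sum_nonneg fun i _ => Finset.sum_nonneg fun j _ => abs_nonneg _
  calc potential S δ G z = 1 / 2 * (A.mulVec x ⬝ᵥ x) := rfl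
    _ ≤ 1 / 2 * ((∑ i, ∑ j, |A i j|) * r ^ 2) := by linarith
    _ ≤ 1 / 2 * ((∑ i, ∑ j, |A i j|) * (euclNorm δ + euclNorm (G z)) ^ 2) := by
        apply mul_le_mul_of_nonneg_left (mul_le_mul_of_nonneg_left hsq hK) (by norm_num)
    _ = 1 / 2 * (∑ i, ∑ j, |A i j|) * (euclNorm δ + euclNorm (G z)) ^ 2 := by ring

lemma potential_measurable {U : Type*} [MeasurableSpace U] {N : ℕ}
    (S : Matrix (Fin N) (Fin N) ℝ) (δ : Fin N → ℝ) {G : U → Fin N → ℝ}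
    (hG : Measurable G) : Measurable (potential S δ G) := by
  unfold potential Matrix.mulVec dotProduct
  apply Measurable.const_mul
  apply Finset.measurable_sum
  intro i _
  apply Measurable.mul
  · apply Finset.measurable_sum
    intro j _
    exact (measurable_const.sub ((measurable_pi_apply j).comp hG)).const_mul _
  · exact measurable_const.sub ((measurable_pi_apply i).comp hG)

lemma potential_continuous {N : ℕ} (S : Matrix (Fin N) (Fin N) ℝ) (δ : Fin N → ℝ) :
    Continuous (fun v : Fin N → ℝ => 1 / 2 * ((S⁻¹).mulVec (δ - v) ⬝ᵥ (δ - v))) := by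
  unfold Matrix.mulVec dotProduct
  apply continuous_const.mul
  apply continuous_finset_sum
  intro i _
  apply Continuous.mul
  · apply continuous_finset_sum
    intro j _
    exact continuous_const.mul (continuous_const.sub (continuous_apply j))
  · exact continuous_const.sub (continuous_apply i)

lemma integrable_exp_neg_of_nonneg {U : Type*} [MeasurableSpace U] {ρ : Measure U}
    [IsFiniteMeasure ρ] {B : U → ℝ} (hm : Measurable B) (hnn : ∀ z, 0 ≤ B z) :
    Integrable (fun z => Real.exp (-B z)) ρ := by
  apply (integrable_const (1:ℝ)).mono' (hm.neg.exp).aestronglyMeasurable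
  filter_upwards with z
  rw [Real.norm_eq_abs, abs_of_pos (Real.exp_pos _)]
  exact Real.exp_le_one_iff.mpr (neg_nonpos.mpr (hnn z))

/-- Hellinger convergence of Gibbs posteriors for forward maps dominated by a
square-integrable envelope and converging a.e. (Gaussian-prior setting), with
a uniform positive lower bound on the normalizing constants. -/
theorem hellinger_convergence_with_envelope
    {U : Type*} [MeasurableSpace U] (ρ : Measure U) [IsProbabilityMeasure ρ]
    {N : ℕ} (S : Matrix (Fin N) (Fin N) ℝ) (hS : S.PosDef) (δ : Fin N → ℝ)
    (G : ℕ → U → Fin N → ℝ) (G0 : U → Fin N → ℝ)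
    (hGmeas : ∀ n, Measurable (G n)) (hG0meas : Measurable G0)
    (W : U → ℝ) (hWmeas : Measurable W) (hWnn : ∀ z, 0 ≤ W z)
    (hWint : Integrable (fun z => (1 + W z) ^ 2) ρ)
    (hbound : ∀ n, ∀ᵐ z ∂ρ, euclNorm (G n z) ≤ W z)
    (hbound0 : ∀ᵐ z ∂ρ, euclNorm (G0 z) ≤ W z)
    (hconv : ∀ᵐ z ∂ρ, Tendsto (fun n => G n z) atTop (nhds (G0 z))) :
    (∃ z0 > 0, (∀ n, z0 ≤ ∫ w, Real.exp (-(potential S δ (G n) w)) ∂ρ) ∧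
        z0 ≤ ∫ w, Real.exp (-(potential S δ G0 w)) ∂ρ) ∧
    Tendsto (fun n => hellingerDist ρ
        (gibbsDensity ρ (potential S δ (G n)))
        (gibbsDensity ρ (potential S δ G0))) atTop (nhds 0) := by
  classical
  set K : ℝ := ∑ i, ∑ j, |S⁻¹ i j| with hKdef
  have hK0 : 0 ≤ K :=
    Finset.sum_nonneg fun i _ => Finset.sum_nonneg fun j _ => abs_nonneg _
  set d : ℝ := euclNorm δ with hddef
  have hd0 : 0 ≤ d := euclNorm_nonneg δ
  set B : U → ℝ := fun z => 1 / 2 * K * (d + W z) ^ 2 with hBdef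
  have hB0 : ∀ z, 0 ≤ B z := fun z => by positivity
  have hBmeas : Measurable B :=
    (((measurable_const.add hWmeas).pow measurable_const).const_mul _)
  have hBint : Integrable (fun z => Real.exp (-B z)) ρ :=
    integrable_exp_neg_of_nonneg hBmeas hB0
  set z0 : ℝ := ∫ z, Real.exp (-B z) ∂ρ with hz0def
  have hz0pos : 0 < z0 := by
    rw [hz0def]
    have : ∀ z, Real.exp (-B z) = Real.exp ((fun z => -B z) z) := fun z => rfl
    exact integral_exp_pos hBint
  -- pointwise facts about the potentials
  have hΦnn : ∀ (H : U → Fin N → ℝ) z, 0 ≤ potential S δ H z :=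
    fun H z => potential_nonneg hS δ H z
  have hΦmeas : ∀ n, Measurable (potential S δ (G n)) :=
    fun n => potential_measurable S δ (hGmeas n)
  have hΦ0meas : Measurable (potential S δ G0) := potential_measurable S δ hG0meas
  have hexp_int : ∀ n, Integrable (fun w => Real.exp (-(potential S δ (G n) w))) ρ :=
    fun n => integrable_exp_neg_of_nonneg (hΦmeas n) (hΦnn _)
  have hexp0_int : Integrable (fun w => Real.exp (-(potential S δ G0 w))) ρ :=
    integrable_exp_neg_of_nonneg hΦ0meas (hΦnn _)
  -- lower bound on normalizers
  have key : ∀ (H : U → Fin N → ℝ), Measurable H → (∀ᵐ z ∂ρ, euclNorm (H z) ≤ W z) →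
      z0 ≤ ∫ w, Real.exp (-(potential S δ H w)) ∂ρ := by
    intro H hHm hHb
    apply integral_mono_ae hBint (integrable_exp_neg_of_nonneg
      (potential_measurable S δ hHm) (hΦnn _))
    filter_upwards [hHb] with z hz
    apply Real.exp_le_exp.mpr
    apply neg_le_neg
    calc potential S δ H z ≤ 1 / 2 * K * (d + euclNorm (H z)) ^ 2 := potential_le S δ H z
      _ ≤ B z := by
          apply mul_le_mul_of_nonneg_left _ (by positivity)
          have h0 := euclNorm_nonneg (H z)
          exact pow_le_pow_left₀ (by linarith) (by linarith) 2
  have hZn : ∀ n, z0 ≤ ∫ w, Real.exp (-(potential S δ (G n) w)) ∂ρ :=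
    fun n => key (G n) (hGmeas n) (hbound n)
  have hZ0 : z0 ≤ ∫ w, Real.exp (-(potential S δ G0 w)) ∂ρ := key G0 hG0meas hbound0
  refine ⟨⟨z0, hz0pos, hZn, hZ0⟩, ?_⟩
  -- pointwise convergence of the potentials
  have hΦconv : ∀ᵐ z ∂ρ, Tendsto (fun n => potential S δ (G n) z) atTop
      (nhds (potential S δ G0 z)) := by
    filter_upwards [hconv] with z hz
    exact ((potential_continuous S δ).tendsto (G0 z)).comp hz
  -- Z_n → Z_0
  set Z : ℕ → ℝ := fun n => ∫ w, Real.exp (-(potential S δ (G n) w)) ∂ρ with hZdef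
  set Z0 : ℝ := ∫ w, Real.exp (-(potential S δ G0 w)) ∂ρ with hZ0def
  have hZtend : Tendsto Z atTop (nhds Z0) := by
    apply tendsto_integral_of_dominated_convergence (fun _ => (1:ℝ))
      (fun n => ((hΦmeas n).neg.exp).aestronglyMeasurable) (integrable_const 1)
    · intro n
      filter_upwards with z
      rw [Real.norm_eq_abs, abs_of_pos (Real.exp_pos _)]
      exact Real.exp_le_one_iff.mpr (neg_nonpos.mpr (hΦnn _ z))
    · filter_upwards [hΦconv] with z hz
      exact (Real.continuous_exp.tendsto _).comp hz.neg
  have hZ0pos : 0 < Z0 := lt_of_lt_of_le hz0pos hZ0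
  have hZnpos : ∀ n, 0 < Z n := fun n => lt_of_lt_of_le hz0pos (hZn n)
  -- bounds on the gibbs densities
  have hgle : ∀ (Φ : U → ℝ) (hnn : ∀ z, 0 ≤ Φ z)
      (hZ : z0 ≤ ∫ w, Real.exp (-Φ w) ∂ρ) (z : U),
      gibbsDensity ρ Φ z ≤ 1 / z0 := by
    intro Φ hnn hZ z
    exact div_le_div₀ (by norm_num) (Real.exp_le_one_iff.mpr (neg_nonpos.mpr (hnn z)))
      hz0pos hZ
  have hgnn : ∀ (Φ : U → ℝ) (hZ : 0 < ∫ w, Real.exp (-Φ w) ∂ρ) (z : U),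
      0 ≤ gibbsDensity ρ Φ z := fun Φ hZ z =>
    div_nonneg (Real.exp_pos _).le hZ.le
  set M : ℝ := Real.sqrt (1 / z0) with hMdef
  have hM0 : 0 ≤ M := Real.sqrt_nonneg _
  -- the integrand of the squared Hellinger distance
  set F : ℕ → U → ℝ := fun n z =>
    (Real.sqrt (gibbsDensity ρ (potential S δ (G n)) z)
      - Real.sqrt (gibbsDensity ρ (potential S δ G0) z)) ^ 2 with hFdef
  have hsqrt_bound : ∀ (Φ : U → ℝ) (hnn : ∀ z, 0 ≤ Φ z)
      (hZ : z0 ≤ ∫ w, Real.exp (-Φ w) ∂ρ) (z : U),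
      Real.sqrt (gibbsDensity ρ Φ z) ≤ M := by
    intro Φ hnn hZ z
    exact Real.sqrt_le_sqrt (hgle Φ hnn hZ z)
  have hFbound : ∀ n z, F n z ≤ M ^ 2 := by
    intro n z
    rw [hFdef]
    simp only
    rw [← sq_abs]
    apply pow_le_pow_left₀ (abs_nonneg _) _ 2
    rw [abs_sub_le_iff]
    constructor
    · have := hsqrt_bound _ (hΦnn (G n)) (hZn n) z
      have := Real.sqrt_nonneg (gibbsDensity ρ (potential S δ G0) z)
      linarith
    · have := hsqrt_bound _ (hΦnn G0) hZ0 z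
      have := Real.sqrt_nonneg (gibbsDensity ρ (potential S δ (G n)) z)
      linarith
  have hFmeas : ∀ n, AEStronglyMeasurable (F n) ρ := by
    intro n
    apply Measurable.aestronglyMeasurable
    apply Measurable.pow _ measurable_const
    apply Measurable.sub
    · exact (Real.continuous_sqrt.measurable).comp ((hΦmeas n).neg.exp.div_const _)
    · exact (Real.continuous_sqrt.measurable).comp (hΦ0meas.neg.exp.div_const _)
  have hFtend : ∀ᵐ z ∂ρ, Tendsto (fun n => F n z) atTop (nhds 0) := by
    filter_upwards [hΦconv] with z hz
    have h1 : Tendsto (fun n => gibbsDensity ρ (potential S δ (G n)) z) atTop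
        (nhds (gibbsDensity ρ (potential S δ G0) z)) := by
      apply Tendsto.div _ hZtend hZ0pos.ne'
      exact (Real.continuous_exp.tendsto _).comp hz.neg
    have h2 : Tendsto (fun n => F n z) atTop
        (nhds ((Real.sqrt (gibbsDensity ρ (potential S δ G0) z)
          - Real.sqrt (gibbsDensity ρ (potential S δ G0) z)) ^ 2)) :=
      (h1.sqrt.sub (tendsto_const_nhds
        (x := Real.sqrt (gibbsDensity ρ (potential S δ G0) z)))).pow 2
    simpa using h2
  have hItend : Tendsto (fun n => ∫ z, F n z ∂ρ) atTop (nhds (∫ _z, (0:ℝ) ∂ρ)) := by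
    apply tendsto_integral_of_dominated_convergence (fun _ => M ^ 2) hFmeas
      (integrable_const _)
    · intro n
      filter_upwards with z
      rw [Real.norm_eq_abs, abs_of_nonneg (sq_nonneg _)]
      exact hFbound n z
    · exact hFtend
  rw [integral_zero] at hItend
  have hfinal : Tendsto (fun n => Real.sqrt (1 / 2 * ∫ z, F n z ∂ρ)) atTop
      (nhds (Real.sqrt (1 / 2 * 0))) :=
    (Real.continuous_sqrt.tendsto _).comp (hItend.const_mul _)
  simpa [hellingerDist, hFdef] using hfinal
end

section
/- Let (U,Θ,ρ) be a probability space, N ∈ ℕ, Σ a symmetric positive definite N×N real matrix, and δ ∈ ℝ^N. Let W : U → [0,∞) be measurable with ∫_U (1 + W(z))⁴ dρ(z) < ∞, and for each ε ∈ (0,1] let G_ε : U → ℝ^N and G_0 : U → ℝ^N be measurable maps with |G_ε(z)| ≤ W(z), |G_0(z)| ≤ W(z), and |G_ε(z) − G_0(z)| ≤ W(z) ε^{1/2} for ρ-almost every z. Define Φ_ε(z) = (1/2)⟨Σ^{-1}(δ − G_ε(z)), δ − G_ε(z)⟩ (and similarly Φ_0), Z_ε = ∫_U exp(−Φ_ε)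 dρ, Z_0 = ∫_U exp(−Φ_0) dρ, and let μ_ε, μ_0 be the probability measures with densities dμ_ε/dρ = exp(−Φ_ε)/Z_ε and dμ_0/dρ = exp(−Φ_0)/Z_0. Then there is a constant c, depending only on ∫(1+W)⁴ dρ, |δ| and Σ, such that d_Hell(μ_ε, μ_0) ≤ c ε^{1/2} for all ε ∈ (0,1]. -/
open MeasureTheory Real Filter Matrix

namespace Helpers

variable {N : ℕ}

lemma euclNorm_nonneg (v : Fin N → ℝ) : 0 ≤ euclNorm v := Real.sqrt_nonneg _

lemma euclNorm_eq_norm (v : Fin N → ℝ) :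
    euclNorm v = ‖(WithLp.equiv 2 (Fin N → ℝ)).symm v‖ := by
  rw [EuclideanSpace.norm_eq, euclNorm]
  congr 1
  simp [dotProduct, Real.norm_eq_abs, sq_abs, sq]

lemma euclNorm_sub_le (a b : Fin N → ℝ) : euclNorm (a - b) ≤ euclNorm a + euclNorm b := by
  simp only [euclNorm_eq_norm]
  exact norm_sub_le ((WithLp.equiv 2 (Fin N → ℝ)).symm a) ((WithLp.equiv 2 (Fin N → ℝ)).symm b)

lemma euclNorm_neg (v : Fin N → ℝ) : euclNorm (-v) = euclNorm v := by
  unfold euclNorm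
  congr 1
  simp [dotProduct]

lemma abs_apply_le_euclNorm (v : Fin N → ℝ) (j : Fin N) : |v j| ≤ euclNorm v := by
  rw [euclNorm, ← Real.sqrt_sq_eq_abs]
  apply Real.sqrt_le_sqrt
  have h := Finset.single_le_sum (f := fun i => v i * v i)
    (fun i _ => mul_self_nonneg (v i)) (Finset.mem_univ j)
  simpa [dotProduct, sq] using h

lemma bilin_bound (A : Matrix (Fin N) (Fin N) ℝ) (u v : Fin N → ℝ) :
    |A.mulVec u ⬝ᵥ v| ≤ (∑ i, ∑ j, |A i j|) * (euclNorm u * euclNorm v) := by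
  have h1 : A.mulVec u ⬝ᵥ v = ∑ i, ∑ j, A i j * u j * v i := by
    simp [Matrix.mulVec, dotProduct, Finset.sum_mul]
  rw [h1, Finset.sum_mul]
  refine (Finset.abs_sum_le_sum_abs _ _).trans (Finset.sum_le_sum fun i _ => ?_)
  rw [Finset.sum_mul]
  refine (Finset.abs_sum_le_sum_abs _ _).trans (Finset.sum_le_sum fun j _ => ?_)
  rw [abs_mul, abs_mul]
  have hu := abs_apply_le_euclNorm u j
  have hv := abs_apply_le_euclNorm v i
  have h2 : |u j| * |v i| ≤ euclNorm u * euclNorm v :=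
    mul_le_mul hu hv (abs_nonneg _) (euclNorm_nonneg _)
  have := mul_le_mul_of_nonneg_left h2 (abs_nonneg (A i j))
  linarith

lemma quad_diff_le (A : Matrix (Fin N) (Fin N) ℝ) (a b : Fin N → ℝ) :
    |A.mulVec a ⬝ᵥ a - A.mulVec b ⬝ᵥ b| ≤
      (∑ i, ∑ j, |A i j|) * (euclNorm (a - b) * (euclNorm a + euclNorm b)) := by
  have hid : A.mulVec a ⬝ᵥ a - A.mulVec b ⬝ᵥ b
      = A.mulVec a ⬝ᵥ (a - b) + A.mulVec (a - b) ⬝ᵥ b := by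
    rw [Matrix.mulVec_sub, sub_dotProduct, dotProduct_sub]
    ring
  rw [hid]
  refine (abs_add_le _ _).trans ?_
  have h1 := bilin_bound A a (a - b)
  have h2 := bilin_bound A (a - b) b
  have hK : 0 ≤ ∑ i, ∑ j, |A i j| :=
    Finset.sum_nonneg fun i _ => Finset.sum_nonneg fun j _ => abs_nonneg _
  nlinarith [euclNorm_nonneg (a - b), euclNorm_nonneg a, euclNorm_nonneg b]

lemma abs_exp_neg_sub_le {a b : ℝ} (ha : 0 ≤ a) (hb : 0 ≤ b) :
    |Real.exp (-a) - Real.exp (-b)| ≤ |a - b| := by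
  wlog hab : a ≤ b generalizing a b
  · rw [abs_sub_comm, abs_sub_comm a b]; exact this hb ha (le_of_not_ge hab)
  have h1 : Real.exp (-a) ≤ 1 := Real.exp_le_one_iff.2 (neg_nonpos.2 ha)
  have h2 : (a - b) + 1 ≤ Real.exp (a - b) := Real.add_one_le_exp _
  have h3 : Real.exp (-b) = Real.exp (-a) * Real.exp (a - b) := by
    rw [← Real.exp_add]; ring_nf
  have h4 : Real.exp (-b) ≤ Real.exp (-a) := Real.exp_le_exp.2 (by linarith)
  rw [abs_of_nonneg (by linarith), abs_of_nonpos (by linarith : a - b ≤ 0)]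
  have h5 : 0 ≤ Real.exp (-a) := Real.exp_nonneg _
  have h6 : Real.exp (a - b) ≤ 1 := Real.exp_le_one_iff.2 (by linarith)
  nlinarith

lemma inv_sqrt_diff {x y m : ℝ} (hm : 0 < m) (hx : m ≤ x) (hy : m ≤ y) :
    |1 / Real.sqrt x - 1 / Real.sqrt y| ≤ |x - y| / (2 * m * Real.sqrt m) := by
  have hx0 : (0:ℝ) < x := lt_of_lt_of_le hm hx
  have hy0 : (0:ℝ) < y := lt_of_lt_of_le hm hy
  have hsx : Real.sqrt m ≤ Real.sqrt x := Real.sqrt_le_sqrt hx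
  have hsy : Real.sqrt m ≤ Real.sqrt y := Real.sqrt_le_sqrt hy
  have hsm : 0 < Real.sqrt m := Real.sqrt_pos.2 hm
  have hsx0 : 0 < Real.sqrt x := Real.sqrt_pos.2 hx0
  have hsy0 : 0 < Real.sqrt y := Real.sqrt_pos.2 hy0
  have hmul : (Real.sqrt x - Real.sqrt y) * (Real.sqrt x + Real.sqrt y) = x - y := by
    have h1 := Real.sq_sqrt hx0.le
    have h2 := Real.sq_sqrt hy0.le
    nlinarith
  have habs : |Real.sqrt x - Real.sqrt y| * (Real.sqrt x + Real.sqrt y) = |x - y| := by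
    rw [← abs_of_pos (by linarith : (0:ℝ) < Real.sqrt x + Real.sqrt y), ← abs_mul, hmul]
  have hnum : |Real.sqrt x - Real.sqrt y| * (2 * Real.sqrt m) ≤ |x - y| := by
    rw [← habs]
    have := abs_nonneg (Real.sqrt x - Real.sqrt y)
    nlinarith
  have heq : |1 / Real.sqrt x - 1 / Real.sqrt y|
      = |Real.sqrt x - Real.sqrt y| / (Real.sqrt x * Real.sqrt y) := by
    rw [div_sub_div _ _ hsx0.ne' hsy0.ne', one_mul, mul_one, abs_div, abs_of_pos (mul_pos hsx0 hsy0),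
      abs_sub_comm]
  rw [heq]
  have hden : m ≤ Real.sqrt x * Real.sqrt y := by
    have := Real.sq_sqrt hm.le
    nlinarith
  have h2m : 0 < 2 * Real.sqrt m := by linarith
  rw [div_le_div_iff₀ (mul_pos hsx0 hsy0) (by positivity)]
  have hA := abs_nonneg (Real.sqrt x - Real.sqrt y)
  have hB := abs_nonneg (x - y)
  nlinarith [mul_le_mul hnum hden hm.le hB]

end Helpers

set_option maxHeartbeats 1000000 in
/-- Hellinger rate `O(ε^{1/2})` for Gibbs posteriors when the forward maps and
the homogenization error are dominated by an envelope `W` with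
`∫ (1+W)⁴ dρ < ∞` (Gaussian-prior rate theorem). -/
theorem hellinger_rate_gaussian_prior
    {U : Type*} [MeasurableSpace U] (ρ : Measure U) [IsProbabilityMeasure ρ]
    {N : ℕ} (S : Matrix (Fin N) (Fin N) ℝ) (hS : S.PosDef) (δ : Fin N → ℝ)
    (W : U → ℝ) (hWmeas : Measurable W) (hWnn : ∀ z, 0 ≤ W z)
    (hWint : Integrable (fun z => (1 + W z) ^ 4) ρ)
    (G : ℝ → U → Fin N → ℝ) (G0 : U → Fin N → ℝ)
    (hGmeas : ∀ ε ∈ Set.Ioc (0 : ℝ) 1, Measurable (G ε)) (hG0meas : Measurable G0)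
    (hbound : ∀ ε ∈ Set.Ioc (0 : ℝ) 1, ∀ᵐ z ∂ρ, euclNorm (G ε z) ≤ W z)
    (hbound0 : ∀ᵐ z ∂ρ, euclNorm (G0 z) ≤ W z)
    (hrate : ∀ ε ∈ Set.Ioc (0 : ℝ) 1,
        ∀ᵐ z ∂ρ, euclNorm (G ε z - G0 z) ≤ W z * Real.sqrt ε) :
    ∃ c : ℝ, ∀ ε ∈ Set.Ioc (0 : ℝ) 1,
      hellingerDist ρ (gibbsDensity ρ (potential S δ (G ε)))
          (gibbsDensity ρ (potential S δ G0))
        ≤ c * Real.sqrt ε := by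
  classical
  set K := ∑ i, ∑ j, |S⁻¹ i j| with hKdef
  have hK0 : 0 ≤ K :=
    Finset.sum_nonneg fun i _ => Finset.sum_nonneg fun j _ => abs_nonneg _
  set d := euclNorm δ with hddef
  have hd0 : 0 ≤ d := Helpers.euclNorm_nonneg δ
  set B : U → ℝ := fun z => K * ((d + 1) ^ 2 * (1 + W z) ^ 2) with hBdef
  -- measurability of potentials
  have hPmeas : ∀ Gf : U → Fin N → ℝ, Measurable Gf → Measurable (potential S δ Gf) := by
    intro Gf hGf
    unfold potential
    apply Measurable.const_mul
    simp only [Matrix.mulVec, dotProduct, Pi.sub_apply]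
    apply Finset.measurable_sum
    intro i _
    apply Measurable.mul
    · apply Finset.measurable_sum
      intro j _
      exact (measurable_const.sub ((measurable_pi_apply j).comp hGf)).const_mul _
    · exact measurable_const.sub ((measurable_pi_apply i).comp hGf)
  -- nonnegativity of potentials
  have hP0 : ∀ (Gf : U → Fin N → ℝ) (z : U), 0 ≤ potential S δ Gf z := by
    intro Gf z
    unfold potential
    have h := (hS.inv.posSemidef).dotProduct_mulVec_nonneg (δ - Gf z)
    rw [star_trivial, dotProduct_comm] at h
    linarith
  -- potential upper bound
  have hPle : ∀ (Gf : U → Fin N → ℝ) (z : U), euclNorm (Gf z) ≤ W z →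
      potential S δ Gf z ≤ B z := by
    intro Gf z hzb
    unfold potential
    have h1 := Helpers.bilin_bound (S⁻¹) (δ - Gf z) (δ - Gf z)
    have h2 : euclNorm (δ - Gf z) ≤ d + W z :=
      (Helpers.euclNorm_sub_le δ (Gf z)).trans (by linarith)
    have h3 : 0 ≤ euclNorm (δ - Gf z) := Helpers.euclNorm_nonneg _
    have hW := hWnn z
    have h4 : euclNorm (δ - Gf z) * euclNorm (δ - Gf z) ≤ (d + W z) * (d + W z) :=
      mul_le_mul h2 h2 h3 (by linarith)
    have e1 : d + W z ≤ (d + 1) * (1 + W z) := by nlinarith [mul_nonneg hd0 hW]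
    have h5 : (d + W z) * (d + W z) ≤ (d + 1) ^ 2 * (1 + W z) ^ 2 := by
      nlinarith [mul_le_mul e1 e1 (by linarith) (by positivity)]
    have h6 : S⁻¹ *ᵥ (δ - Gf z) ⬝ᵥ (δ - Gf z) ≤ K * ((d + 1) ^ 2 * (1 + W z) ^ 2) := by
      refine (le_abs_self _).trans (h1.trans ?_)
      have := mul_le_mul_of_nonneg_left (h4.trans h5) hK0
      linarith
    have h7 : 0 ≤ K * ((d + 1) ^ 2 * (1 + W z) ^ 2) := by positivity
    show 1 / 2 * (S⁻¹ *ᵥ (δ - Gf z) ⬝ᵥ (δ - Gf z)) ≤ K * ((d + 1) ^ 2 * (1 + W z) ^ 2)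
    linarith
  -- potential difference bound
  have hPdiffpt : ∀ (g1 g0 : Fin N → ℝ) (w s : ℝ), 0 ≤ w → 0 ≤ s →
      euclNorm g1 ≤ w → euclNorm g0 ≤ w → euclNorm (g1 - g0) ≤ w * s →
      |1 / 2 * (S⁻¹ *ᵥ (δ - g1) ⬝ᵥ (δ - g1)) - 1 / 2 * (S⁻¹ *ᵥ (δ - g0) ⬝ᵥ (δ - g0))|
        ≤ (K * ((d + 1) ^ 2 * (1 + w) ^ 2)) * s := by
    intro g1 g0 w s hw hs h1 h0 hdd
    have hq := Helpers.quad_diff_le (S⁻¹) (δ - g1) (δ - g0)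
    have he : euclNorm ((δ - g1) - (δ - g0)) = euclNorm (g1 - g0) := by
      rw [show (δ - g1) - (δ - g0) = -(g1 - g0) by abel, Helpers.euclNorm_neg]
    rw [he] at hq
    have ha : euclNorm (δ - g1) ≤ d + w := (Helpers.euclNorm_sub_le δ g1).trans (by linarith)
    have hb : euclNorm (δ - g0) ≤ d + w := (Helpers.euclNorm_sub_le δ g0).trans (by linarith)
    have ha0 : 0 ≤ euclNorm (δ - g1) := Helpers.euclNorm_nonneg _
    have hb0 : 0 ≤ euclNorm (δ - g0) := Helpers.euclNorm_nonneg _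
    have hd0' : 0 ≤ euclNorm (g1 - g0) := Helpers.euclNorm_nonneg _
    have hhalf : |1 / 2 * (S⁻¹ *ᵥ (δ - g1) ⬝ᵥ (δ - g1)) - 1 / 2 * (S⁻¹ *ᵥ (δ - g0) ⬝ᵥ (δ - g0))|
        = 1 / 2 * |S⁻¹ *ᵥ (δ - g1) ⬝ᵥ (δ - g1) - S⁻¹ *ᵥ (δ - g0) ⬝ᵥ (δ - g0)| := by
      rw [show 1 / 2 * (S⁻¹ *ᵥ (δ - g1) ⬝ᵥ (δ - g1)) - 1 / 2 * (S⁻¹ *ᵥ (δ - g0) ⬝ᵥ (δ - g0))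
          = 1 / 2 * (S⁻¹ *ᵥ (δ - g1) ⬝ᵥ (δ - g1) - S⁻¹ *ᵥ (δ - g0) ⬝ᵥ (δ - g0)) by ring,
        abs_mul]
      norm_num
    rw [hhalf]
    have hstep : euclNorm (g1 - g0) * (euclNorm (δ - g1) + euclNorm (δ - g0))
        ≤ (w * s) * (2 * (d + w)) := by
      apply mul_le_mul hdd (by linarith) (by linarith) (by positivity)
    have hstep2 : K * (euclNorm (g1 - g0) * (euclNorm (δ - g1) + euclNorm (δ - g0)))
        ≤ K * ((w * s) * (2 * (d + w))) := mul_le_mul_of_nonneg_left hstep hK0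
    have e1 : w ≤ (d + 1) * (1 + w) := by nlinarith [mul_nonneg hd0 hw]
    have e2 : d + w ≤ (d + 1) * (1 + w) := by nlinarith [mul_nonneg hd0 hw]
    have hw2 : w * (d + w) ≤ (d + 1) ^ 2 * (1 + w) ^ 2 := by
      nlinarith [mul_le_mul e1 e2 (by linarith) (by positivity)]
    have hfin : K * (w * (d + w)) * s ≤ K * ((d + 1) ^ 2 * (1 + w) ^ 2) * s := by
      apply mul_le_mul_of_nonneg_right (mul_le_mul_of_nonneg_left hw2 hK0) hs
    have heq : K * (w * s * (2 * (d + w))) = 2 * (K * (w * (d + w)) * s) := by ring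
    linarith [hq, hstep2, hfin]
  -- integrability
  have h1W : ∀ z, (1 : ℝ) ≤ 1 + W z := fun z => by linarith [hWnn z]
  have hsqint : Integrable (fun z => (1 + W z) ^ 2) ρ := by
    refine hWint.mono' ((measurable_const.add hWmeas).pow_const 2).aestronglyMeasurable ?_
    filter_upwards with z
    have h := h1W z
    rw [Real.norm_eq_abs, abs_of_nonneg (by positivity)]
    exact pow_le_pow_right₀ (h1W z) (by norm_num)
  have hBmeas : Measurable B := by
    rw [hBdef]
    exact (((measurable_const.add hWmeas).pow_const 2).const_mul ((d + 1) ^ 2)).const_mul K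
  have hB0 : ∀ z, 0 ≤ B z := fun z => by
    simp only [hBdef]; positivity
  have hBint : Integrable B ρ := by
    rw [hBdef]
    exact (hsqint.const_mul ((d + 1) ^ 2)).const_mul K
  have hB2int : Integrable (fun z => B z ^ 2) ρ := by
    have he : (fun z => B z ^ 2) = fun z => (K * (d + 1) ^ 2) ^ 2 * (1 + W z) ^ 4 := by
      funext z; simp only [hBdef]; ring
    rw [he]; exact hWint.const_mul _
  have hexpint : ∀ Φ : U → ℝ, Measurable Φ → (∀ z, 0 ≤ Φ z) →
      Integrable (fun z => Real.exp (-Φ z)) ρ := by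
    intro Φ hm h0
    refine (integrable_const (1 : ℝ)).mono' hm.neg.exp.aestronglyMeasurable ?_
    filter_upwards with z
    rw [Real.norm_eq_abs, abs_of_pos (Real.exp_pos _)]
    exact Real.exp_le_one_iff.2 (neg_nonpos.2 (h0 z))
  have hexpBint : Integrable (fun z => Real.exp (-B z)) ρ := hexpint B hBmeas hB0
  set z0 := ∫ z, Real.exp (-B z) ∂ρ with hz0def
  have hz0pos : 0 < z0 := by
    rw [hz0def]
    refine (integral_pos_iff_support_of_nonneg_ae
      (Filter.Eventually.of_forall fun z => (Real.exp_pos _).le) hexpBint).2 ?_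
    have hsupp : Function.support (fun z : U => Real.exp (-B z)) = Set.univ :=
      Set.eq_univ_of_forall fun z => (Real.exp_pos _).ne'
    rw [hsupp, measure_univ]
    norm_num
  have hZlb : ∀ Gf : U → Fin N → ℝ, Measurable Gf →
      (∀ᵐ z ∂ρ, euclNorm (Gf z) ≤ W z) →
      z0 ≤ ∫ z, Real.exp (-potential S δ Gf z) ∂ρ := by
    intro Gf hm hb
    rw [hz0def]
    refine integral_mono_ae hexpBint (hexpint _ (hPmeas Gf hm) (hP0 Gf)) ?_
    filter_upwards [hb] with z hz
    exact Real.exp_le_exp.2 (neg_le_neg (hPle Gf z hz))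
  have hZub : ∀ Gf : U → Fin N → ℝ, Measurable Gf →
      (∫ z, Real.exp (-potential S δ Gf z) ∂ρ) ≤ 1 := by
    intro Gf hm
    calc (∫ z, Real.exp (-potential S δ Gf z) ∂ρ) ≤ ∫ _z, (1 : ℝ) ∂ρ := by
          refine integral_mono (hexpint _ (hPmeas Gf hm) (hP0 Gf)) (integrable_const 1) ?_
          intro z
          exact Real.exp_le_one_iff.2 (neg_nonpos.2 (hP0 Gf z))
      _ = 1 := by simp
  set c1 := ∫ z, B z ^ 2 ∂ρ with hc1def
  set c2 := ∫ z, B z ∂ρ with hc2def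
  have hc1nn : 0 ≤ c1 := by
    rw [hc1def]; exact integral_nonneg fun z => sq_nonneg _
  have hc2nn : 0 ≤ c2 := by
    rw [hc2def]; exact integral_nonneg fun z => hB0 z
  set c' := c1 / (2 * z0) + c2 ^ 2 / (2 * z0 ^ 3) with hc'def
  have hc'nn : 0 ≤ c' := by rw [hc'def]; positivity
  refine ⟨Real.sqrt (c' / 2), ?_⟩
  intro ε hε
  obtain ⟨hε0, hε1⟩ := hε
  have hεmem : ε ∈ Set.Ioc (0 : ℝ) 1 := ⟨hε0, hε1⟩
  have hsε0 : 0 ≤ Real.sqrt ε := Real.sqrt_nonneg ε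
  set Φe := potential S δ (G ε) with hΦe
  set Φo := potential S δ G0 with hΦo
  have hme : Measurable Φe := hPmeas _ (hGmeas ε hεmem)
  have hmo : Measurable Φo := hPmeas _ hG0meas
  have hP0e : ∀ z, 0 ≤ Φe z := hP0 _
  have hP0o : ∀ z, 0 ≤ Φo z := hP0 _
  have hinte : Integrable (fun z => Real.exp (-Φe z)) ρ := hexpint _ hme hP0e
  have hinto : Integrable (fun z => Real.exp (-Φo z)) ρ := hexpint _ hmo hP0o
  set Ze := ∫ z, Real.exp (-Φe z) ∂ρ with hZe
  set Zo := ∫ z, Real.exp (-Φo z) ∂ρ with hZo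
  have hZel : z0 ≤ Ze := hZlb _ (hGmeas ε hεmem) (hbound ε hεmem)
  have hZol : z0 ≤ Zo := hZlb _ hG0meas hbound0
  have hZepos : 0 < Ze := lt_of_lt_of_le hz0pos hZel
  have hZopos : 0 < Zo := lt_of_lt_of_le hz0pos hZol
  have hPdiff : ∀ᵐ z ∂ρ, |Φe z - Φo z| ≤ B z * Real.sqrt ε := by
    filter_upwards [hbound ε hεmem, hbound0, hrate ε hεmem] with z h1 h2 h3
    have h := hPdiffpt (G ε z) (G0 z) (W z) (Real.sqrt ε) (hWnn z) hsε0 h1 h2 h3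
    simpa only [hΦe, hΦo, hBdef, potential] using h
  have hZdiff : |Ze - Zo| ≤ Real.sqrt ε * c2 := by
    rw [hZe, hZo, ← integral_sub hinte hinto]
    have habs : |∫ z, (Real.exp (-Φe z) - Real.exp (-Φo z)) ∂ρ|
        ≤ ∫ z, |Real.exp (-Φe z) - Real.exp (-Φo z)| ∂ρ := by
      simpa [Real.norm_eq_abs] using norm_integral_le_integral_norm
        (μ := ρ) (fun z => Real.exp (-Φe z) - Real.exp (-Φo z))
    refine habs.trans ?_
    have hmono : (∫ z, |Real.exp (-Φe z) - Real.exp (-Φo z)| ∂ρ)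
        ≤ ∫ z, Real.sqrt ε * B z ∂ρ := by
      refine integral_mono_ae (hinte.sub hinto).abs (hBint.const_mul _) ?_
      filter_upwards [hPdiff] with z hz
      have h := Helpers.abs_exp_neg_sub_le (hP0e z) (hP0o z)
      linarith
    refine hmono.trans ?_
    rw [integral_const_mul, ← hc2def]
  have hinvdiff : |1 / Real.sqrt Ze - 1 / Real.sqrt Zo|
      ≤ Real.sqrt ε * c2 / (2 * z0 * Real.sqrt z0) := by
    refine (Helpers.inv_sqrt_diff hz0pos hZel hZol).trans ?_
    have hden : 0 < 2 * z0 * Real.sqrt z0 := by positivity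
    exact (div_le_div_iff_of_pos_right hden).2 hZdiff
  have hsqdiff : ∀ᵐ z ∂ρ, |Real.sqrt (Real.exp (-Φe z)) - Real.sqrt (Real.exp (-Φo z))|
      ≤ 1 / 2 * (B z * Real.sqrt ε) := by
    filter_upwards [hPdiff] with z hz
    rw [← Real.exp_half, ← Real.exp_half,
      show -Φe z / 2 = -(Φe z / 2) by ring, show -Φo z / 2 = -(Φo z / 2) by ring]
    have h := Helpers.abs_exp_neg_sub_le (a := Φe z / 2) (b := Φo z / 2)
      (by linarith [hP0e z]) (by linarith [hP0o z])
    refine h.trans ?_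
    rw [show Φe z / 2 - Φo z / 2 = (Φe z - Φo z) / 2 by ring, abs_div, abs_two]
    linarith
  have hkey : ∀ᵐ z ∂ρ,
      (Real.sqrt (gibbsDensity ρ Φe z) - Real.sqrt (gibbsDensity ρ Φo z)) ^ 2
        ≤ ε * (B z ^ 2 / (2 * z0) + c2 ^ 2 / (2 * z0 ^ 3)) := by
    filter_upwards [hsqdiff] with z hz
    have hge : gibbsDensity ρ Φe z = Real.exp (-Φe z) / Ze := by
      rw [gibbsDensity, hZe]
    have hgo : gibbsDensity ρ Φo z = Real.exp (-Φo z) / Zo := by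
      rw [gibbsDensity, hZo]
    rw [hge, hgo, Real.sqrt_div (Real.exp_nonneg _), Real.sqrt_div (Real.exp_nonneg _)]
    set p := Real.sqrt (Real.exp (-Φe z)) with hp
    set q := Real.sqrt (Real.exp (-Φo z)) with hq
    have hq1 : q ^ 2 ≤ 1 := by
      rw [hq, Real.sq_sqrt (Real.exp_nonneg _)]
      exact Real.exp_le_one_iff.2 (neg_nonpos.2 (hP0o z))
    have hid : p / Real.sqrt Ze - q / Real.sqrt Zo
        = (p - q) * (1 / Real.sqrt Ze) + q * (1 / Real.sqrt Ze - 1 / Real.sqrt Zo) := by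
      ring
    rw [hid]
    have hsq2 : ∀ x y : ℝ, (x + y) ^ 2 ≤ 2 * x ^ 2 + 2 * y ^ 2 := fun x y => by
      nlinarith [sq_nonneg (x - y)]
    refine (hsq2 _ _).trans ?_
    have hx : ((p - q) * (1 / Real.sqrt Ze)) ^ 2
        ≤ ε * B z ^ 2 / (4 * z0) := by
      rw [mul_pow]
      have h1 : (p - q) ^ 2 ≤ (1 / 2 * (B z * Real.sqrt ε)) ^ 2 := by
        rw [← sq_abs]
        exact pow_le_pow_left₀ (abs_nonneg _) hz 2
      have h2 : (1 / Real.sqrt Ze) ^ 2 = 1 / Ze := by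
        rw [div_pow, one_pow, Real.sq_sqrt hZepos.le]
      rw [h2]
      have h3 : 1 / Ze ≤ 1 / z0 := one_div_le_one_div_of_le hz0pos hZel
      have h4 : 0 ≤ 1 / Ze := by positivity
      have h5 : (p - q) ^ 2 * (1 / Ze) ≤ (1 / 2 * (B z * Real.sqrt ε)) ^ 2 * (1 / z0) :=
        mul_le_mul h1 h3 h4 (by positivity)
      have h6 : (1 / 2 * (B z * Real.sqrt ε)) ^ 2 * (1 / z0) = ε * B z ^ 2 / (4 * z0) := by
        rw [mul_pow, mul_pow, Real.sq_sqrt hε0.le]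
        field_simp
        ring
      linarith
    have hy : (q * (1 / Real.sqrt Ze - 1 / Real.sqrt Zo)) ^ 2
        ≤ ε * c2 ^ 2 / (4 * z0 ^ 3) := by
      rw [mul_pow]
      have h1 : (1 / Real.sqrt Ze - 1 / Real.sqrt Zo) ^ 2
          ≤ (Real.sqrt ε * c2 / (2 * z0 * Real.sqrt z0)) ^ 2 := by
        rw [← sq_abs]
        exact pow_le_pow_left₀ (abs_nonneg _) hinvdiff 2
      have h2 : q ^ 2 * (1 / Real.sqrt Ze - 1 / Real.sqrt Zo) ^ 2
          ≤ (Real.sqrt ε * c2 / (2 * z0 * Real.sqrt z0)) ^ 2 := by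
        have h3 := mul_le_mul_of_nonneg_right hq1 (sq_nonneg (1 / Real.sqrt Ze - 1 / Real.sqrt Zo))
        rw [one_mul] at h3
        exact h3.trans h1
      have h4 : (Real.sqrt ε * c2 / (2 * z0 * Real.sqrt z0)) ^ 2 = ε * c2 ^ 2 / (4 * z0 ^ 3) := by
        rw [div_pow, mul_pow, mul_pow, mul_pow, Real.sq_sqrt hε0.le, Real.sq_sqrt hz0pos.le]
        rw [show (2 : ℝ) ^ 2 * z0 ^ 2 * z0 = 4 * z0 ^ 3 by ring]
      linarith
    have hfin : 2 * (ε * B z ^ 2 / (4 * z0)) + 2 * (ε * c2 ^ 2 / (4 * z0 ^ 3))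
        = ε * (B z ^ 2 / (2 * z0) + c2 ^ 2 / (2 * z0 ^ 3)) := by
      field_simp
      ring
    linarith
  have hDint : Integrable (fun z => ε * (B z ^ 2 / (2 * z0) + c2 ^ 2 / (2 * z0 ^ 3))) ρ :=
    ((hB2int.div_const _).add (integrable_const _)).const_mul ε
  have hgmeas : Measurable fun z =>
      (Real.sqrt (gibbsDensity ρ Φe z) - Real.sqrt (gibbsDensity ρ Φo z)) ^ 2 := by
    apply Measurable.pow_const
    apply Measurable.sub
    · exact ((hme.neg.exp.div_const _).sqrt : Measurable fun z =>
        Real.sqrt (Real.exp (-Φe z) / ∫ w, Real.exp (-Φe w) ∂ρ))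
    · exact ((hmo.neg.exp.div_const _).sqrt : Measurable fun z =>
        Real.sqrt (Real.exp (-Φo z) / ∫ w, Real.exp (-Φo w) ∂ρ))
  have hgint : Integrable (fun z =>
      (Real.sqrt (gibbsDensity ρ Φe z) - Real.sqrt (gibbsDensity ρ Φo z)) ^ 2) ρ := by
    refine hDint.mono' hgmeas.aestronglyMeasurable ?_
    filter_upwards [hkey] with z hz
    rw [Real.norm_eq_abs, abs_of_nonneg (sq_nonneg _)]
    exact hz
  have hIle : (∫ z, (Real.sqrt (gibbsDensity ρ Φe z) - Real.sqrt (gibbsDensity ρ Φo z)) ^ 2 ∂ρ)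
      ≤ ε * c' := by
    refine (integral_mono_ae hgint hDint hkey).trans ?_
    rw [integral_const_mul]
    have hadd : (∫ z, (B z ^ 2 / (2 * z0) + c2 ^ 2 / (2 * z0 ^ 3)) ∂ρ)
        = (∫ z, B z ^ 2 / (2 * z0) ∂ρ) + ∫ _z, c2 ^ 2 / (2 * z0 ^ 3) ∂ρ :=
      integral_add (hB2int.div_const _) (integrable_const _)
    rw [hadd, integral_div, ← hc1def, integral_const, probReal_univ]
    simp only [ENNReal.toReal_one, one_smul]
    rw [hc'def]
  unfold hellingerDist
  calc Real.sqrt (1 / 2 * ∫ z, (Real.sqrt (gibbsDensity ρ Φe z)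
        - Real.sqrt (gibbsDensity ρ Φo z)) ^ 2 ∂ρ)
      ≤ Real.sqrt (1 / 2 * (ε * c')) :=
        Real.sqrt_le_sqrt (mul_le_mul_of_nonneg_left hIle (by norm_num))
    _ = Real.sqrt (c' / 2) * Real.sqrt ε := by
        rw [show 1 / 2 * (ε * c') = c' / 2 * ε by ring, Real.sqrt_mul (by positivity) ε]
end
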